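/- Assume (H1)-(H2) with n ≥ 2, and let x_⋆ ∈ ℝⁿ satisfy x_⋆ ≤ g for all g ∈ Γ. Then M₋(+∞) is a closed subset of ℝⁿ homeomorphic to ℝ^{n−1}, and M₋(+∞) ∩ M₋(q) = ∅ for every equilibrium q ∈ E. -/

import Mathlib

open Set Metric Filter Topology Pointwise

noncomputable section

abbrev Euc (n : ℕ) := EuclideanSpace ℝ (Fin n)

/-- `Φ` is a continuous flow on `ℝⁿ`. -/
def IsFlow {n : ℕ} (Φ : ℝ → Euc n → Euc n) : Prop :=
  Continuous (fun p : ℝ × Euc n => Φ p.1 p.2) ∧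
  (∀ x, Φ 0 x = x) ∧
  (∀ t s x, Φ t (Φ s x) = Φ (t + s) x)

/-- `Cp` is a closed, solid, salient convex cone. -/
def IsConeOrder {n : ℕ} (Cp : Set (Euc n)) : Prop :=
  IsClosed Cp ∧ (∀ x ∈ Cp, ∀ y ∈ Cp, x + y ∈ Cp) ∧
  (∀ α : ℝ, 0 < α → ∀ x ∈ Cp, α • x ∈ Cp) ∧
  (interior Cp).Nonempty ∧ Cp ∩ (-Cp) = {0}

/-- `x ≤ y` iff `y - x ∈ C⁺`. -/
def coneLe {n : ℕ} (Cp : Set (Euc n)) (x y : Euc n) : Prop := y - x ∈ Cp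

/-- `x < y` iff `y - x ∈ C⁺ \ {0}`. -/
def coneLt {n : ℕ} (Cp : Set (Euc n)) (x y : Euc n) : Prop := y - x ∈ Cp ∧ y ≠ x

/-- `x ≪ y` iff `y - x ∈ Int C⁺`. -/
def coneLL {n : ℕ} (Cp : Set (Euc n)) (x y : Euc n) : Prop := y - x ∈ interior Cp

/-- `S` is unordered: no two distinct points related by `≤`. -/
def Unordered {n : ℕ} (Cp : Set (Euc n)) (S : Set (Euc n)) : Prop :=
  ∀ x ∈ S, ∀ y ∈ S, x ≠ y → ¬ coneLe Cp x y

/-- (H1): `Φ` is strongly competitive. -/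
def StronglyCompetitive {n : ℕ} (Φ : ℝ → Euc n → Euc n) (Cp : Set (Euc n)) : Prop :=
  ∀ t : ℝ, 0 < t → ∀ x y : Euc n,
    (coneLe Cp (Φ t x) (Φ t y) → coneLe Cp x y) ∧
    (coneLt Cp (Φ t x) (Φ t y) → coneLL Cp x y)

/-- `D` is invariant under the flow. -/
def Invariant {n : ℕ} (Φ : ℝ → Euc n → Euc n) (D : Set (Euc n)) : Prop :=
  ∀ t : ℝ, Φ t '' D = D

/-- (H2): `Γ` is a compact invariant attractor uniformly attracting all compact sets. -/
def Dissipative {n : ℕ} (Φ : ℝ → Euc n → Euc n) (Γ : Set (Euc n)) : Prop :=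
  Γ.Nonempty ∧ IsCompact Γ ∧ Invariant Φ Γ ∧
  ∀ N : Set (Euc n), IsCompact N → ∀ ε > 0, ∃ T : ℝ, ∀ t ≥ T, ∀ x ∈ N,
    Metric.infDist (Φ t x) Γ < ε

/-- The ω-limit set of `x`. -/
def omegaSet {n : ℕ} (Φ : ℝ → Euc n → Euc n) (x : Euc n) : Set (Euc n) :=
  ⋂ t ∈ Ici (0 : ℝ), closure ((fun τ => Φ τ x) '' Ici t)

/-- The α-limit set of `x`. -/
def alphaSet {n : ℕ} (Φ : ℝ → Euc n → Euc n) (x : Euc n) : Set (Euc n) :=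
  ⋂ t ∈ Iic (0 : ℝ), closure ((fun τ => Φ τ x) '' Iic t)

/-- The set `R(Φ)` of recurrent points. -/
def recurrentSet {n : ℕ} (Φ : ℝ → Euc n → Euc n) : Set (Euc n) :=
  {x | x ∈ omegaSet Φ x}

/-- The Birkhoff center `𝓑(Φ)`. -/
def birkhoffCenter {n : ℕ} (Φ : ℝ → Euc n → Euc n) : Set (Euc n) :=
  closure (recurrentSet Φ)

/-- The set `E` of equilibria. -/
def equilibria {n : ℕ} (Φ : ℝ → Euc n → Euc n) : Set (Euc n) :=
  {p | ∀ t : ℝ, Φ t p = p}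

/-- `C = C⁺ ∪ (−C⁺)`. -/
def coneC {n : ℕ} (Cp : Set (Euc n)) : Set (Euc n) := Cp ∪ (-Cp)

/-- `K = closure(ℝⁿ \ C)`. -/
def coneK {n : ℕ} (Cp : Set (Euc n)) : Set (Euc n) := closure ((coneC Cp)ᶜ)

/-- The translated cone `C_x = x + C`. -/
def coneCAt {n : ℕ} (Cp : Set (Euc n)) (x : Euc n) : Set (Euc n) := {y | y - x ∈ coneC Cp}

/-- The translated complementary cone `K_x = x + K`. -/
def coneKAt {n : ℕ} (Cp : Set (Euc n)) (x : Euc n) : Set (Euc n) := {y | y - x ∈ coneK Cp}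


/-- The lower boundary `∂₋S`. -/
def lowerBdry {n : ℕ} (Cp : Set (Euc n)) (S : Set (Euc n)) : Set (Euc n) :=
  {z | (∃ u : ℕ → Euc n, (∀ i, u i ∈ S) ∧ Filter.Tendsto u Filter.atTop (nhds z) ∧
          ∀ i, coneLL Cp z (u i)) ∧
       ¬ ∃ v : ℕ → Euc n, (∀ i, v i ∈ S) ∧ Filter.Tendsto v Filter.atTop (nhds z) ∧
          ∀ i, coneLL Cp (v i) z}

/-- The upper boundary `∂₊S`. -/
def upperBdry {n : ℕ} (Cp : Set (Euc n)) (S : Set (Euc n)) : Set (Euc n) :=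
  {z | (∃ v : ℕ → Euc n, (∀ i, v i ∈ S) ∧ Filter.Tendsto v Filter.atTop (nhds z) ∧
          ∀ i, coneLL Cp (v i) z) ∧
       ¬ ∃ u : ℕ → Euc n, (∀ i, u i ∈ S) ∧ Filter.Tendsto u Filter.atTop (nhds z) ∧
          ∀ i, coneLL Cp z (u i)}

/-- The basin of repulsion `R(q)`. -/
def basinRep {n : ℕ} (Φ : ℝ → Euc n → Euc n) (q : Euc n) : Set (Euc n) :=
  {x | Filter.Tendsto (fun t : ℝ => Φ (-t) x) Filter.atTop (nhds q)}

/-- The basin of lower repulsion `R₋(q)`. -/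
def basinRepLower {n : ℕ} (Φ : ℝ → Euc n → Euc n) (Cp : Set (Euc n)) (q : Euc n) :
    Set (Euc n) :=
  {x ∈ basinRep Φ q | ∃ T : ℝ, 0 < T ∧ ∀ t ≥ T, coneLL Cp (Φ (-t) x) q}

/-- The basin of upper repulsion `R₊(q)`. -/
def basinRepUpper {n : ℕ} (Φ : ℝ → Euc n → Euc n) (Cp : Set (Euc n)) (q : Euc n) :
    Set (Euc n) :=
  {x ∈ basinRep Φ q | ∃ T : ℝ, 0 < T ∧ ∀ t ≥ T, coneLL Cp q (Φ (-t) x)}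

/-- `M₋(q) = ∂₋R₋(q)`. -/
def Mminus {n : ℕ} (Φ : ℝ → Euc n → Euc n) (Cp : Set (Euc n)) (q : Euc n) : Set (Euc n) :=
  lowerBdry Cp (basinRepLower Φ Cp q)

/-- `M₊(p) = ∂₊R₊(p)`. -/
def Mplus {n : ℕ} (Φ : ℝ → Euc n → Euc n) (Cp : Set (Euc n)) (p : Euc n) : Set (Euc n) :=
  upperBdry Cp (basinRepUpper Φ Cp p)

/-- `R(∞) = {x : |Φ_{−t}(x)| → ∞}`. -/
def repInfty {n : ℕ} (Φ : ℝ → Euc n → Euc n) : Set (Euc n) :=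
  {x | Filter.Tendsto (fun t : ℝ => ‖Φ (-t) x‖) Filter.atTop Filter.atTop}

/-- `R₋(+∞) = Int R̃₋(+∞)`. -/
def RminusInfty {n : ℕ} (Φ : ℝ → Euc n → Euc n) (Cp : Set (Euc n)) (xlo : Euc n) :
    Set (Euc n) :=
  interior {x ∈ repInfty Φ | ∃ T : ℝ, 0 < T ∧ ∀ t ≥ T, coneLL Cp xlo (Φ (-t) x)}

/-- `M₋(+∞) = ∂₋R₋(+∞)`. -/
def MminusInfty {n : ℕ} (Φ : ℝ → Euc n → Euc n) (Cp : Set (Euc n)) (xlo : Euc n) :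
    Set (Euc n) :=
  lowerBdry Cp (RminusInfty Φ Cp xlo)

/-- `R₊(−∞) = Int R̃₊(−∞)`. -/
def RplusInfty {n : ℕ} (Φ : ℝ → Euc n → Euc n) (Cp : Set (Euc n)) (xhi : Euc n) :
    Set (Euc n) :=
  interior {x ∈ repInfty Φ | ∃ T : ℝ, 0 < T ∧ ∀ t ≥ T, coneLL Cp (Φ (-t) x) xhi}

/-- `M₊(−∞) = ∂₊R₊(−∞)`. -/
def MplusInfty {n : ℕ} (Φ : ℝ → Euc n → Euc n) (Cp : Set (Euc n)) (xhi : Euc n) :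
    Set (Euc n) :=
  upperBdry Cp (RplusInfty Φ Cp xhi)

section ConeBasics

variable {n : ℕ} {Cp : Set (Euc n)}

lemma cone_zero (hC : IsConeOrder Cp) : (0 : Euc n) ∈ Cp := by
  have h := hC.2.2.2.2
  have : (0 : Euc n) ∈ Cp ∩ (-Cp) := by rw [h]; rfl
  exact this.1

lemma cone_add (hC : IsConeOrder Cp) {x y : Euc n} (hx : x ∈ Cp) (hy : y ∈ Cp) :
    x + y ∈ Cp := hC.2.1 x hx y hy

lemma cone_smul (hC : IsConeOrder Cp) {α : ℝ} (hα : 0 < α) {x : Euc n} (hx : x ∈ Cp) :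
    α • x ∈ Cp := hC.2.2.1 α hα x hx

lemma cone_salient (hC : IsConeOrder Cp) {x : Euc n} (hx : x ∈ Cp) (hx' : -x ∈ Cp) :
    x = 0 := by
  have h := hC.2.2.2.2
  have : x ∈ Cp ∩ (-Cp) := ⟨hx, by simpa using hx'⟩
  rw [h] at this; exact this

lemma int_add_cone (hC : IsConeOrder Cp) {x y : Euc n} (hx : x ∈ interior Cp)
    (hy : y ∈ Cp) : x + y ∈ interior Cp := by
  have hsub : (fun z => z + y) '' interior Cp ⊆ Cp := by
    rintro _ ⟨z, hz, rfl⟩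
    exact cone_add hC (interior_subset hz) hy
  have hopen : IsOpen ((fun z => z + y) '' interior Cp) :=
    (Homeomorph.addRight y).isOpenMap _ isOpen_interior
  exact interior_maximal hsub hopen ⟨x, hx, rfl⟩

lemma cone_add_int (hC : IsConeOrder Cp) {x y : Euc n} (hx : x ∈ Cp)
    (hy : y ∈ interior Cp) : x + y ∈ interior Cp := by
  rw [add_comm]; exact int_add_cone hC hy hx

lemma int_smul (hC : IsConeOrder Cp) {α : ℝ} (hα : 0 < α) {x : Euc n}
    (hx : x ∈ interior Cp) : α • x ∈ interior Cp := by
  have hsub : (fun z => α • z) '' interior Cp ⊆ Cp := by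
    rintro _ ⟨z, hz, rfl⟩
    exact cone_smul hC hα (interior_subset hz)
  have hopen : IsOpen ((fun z => α • z) '' interior Cp) :=
    (isOpenMap_smul₀ (ne_of_gt hα)) _ isOpen_interior
  exact interior_maximal hsub hopen ⟨x, hx, rfl⟩

lemma zero_not_int (hn : 1 ≤ n) (hC : IsConeOrder Cp) : (0 : Euc n) ∉ interior Cp := by
  intro h0
  obtain ⟨ε, hε, hball⟩ := Metric.isOpen_iff.1 isOpen_interior 0 h0
  have hne : ∃ v : Euc n, v ≠ 0 := by
    refine ⟨EuclideanSpace.single ⟨0, hn⟩ (1:ℝ), ?_⟩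
    intro h
    have := congrArg (fun f : Euc n => f ⟨0, hn⟩) h
    simp [EuclideanSpace.single] at this
  obtain ⟨v, hv⟩ := hne
  set w := (ε / (2 * ‖v‖)) • v with hw
  have hwnorm : ‖w‖ < ε := by
    have hvpos : 0 < ‖v‖ := norm_pos_iff.2 hv
    rw [hw, norm_smul]
    have h1 : ‖ε / (2 * ‖v‖)‖ = ε / (2 * ‖v‖) := by
      rw [Real.norm_eq_abs]; exact abs_of_pos (by positivity)
    rw [h1, div_mul_eq_mul_div, mul_comm, div_lt_iff₀ (by positivity)]
    nlinarith
  have hwmem : w ∈ Cp := interior_subset (hball (by simpa [Metric.mem_ball] using hwnorm))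
  have hwmem' : -w ∈ Cp := interior_subset (hball (by simpa [Metric.mem_ball] using hwnorm))
  have : w = 0 := cone_salient hC hwmem hwmem'
  have hvpos : 0 < ‖v‖ := norm_pos_iff.2 hv
  have hc : (ε / (2 * ‖v‖)) ≠ 0 := by positivity
  exact hv (by simpa [hw, hc] using this)

end ConeBasics
section ConeGeom

variable {n : ℕ} {Cp : Set (Euc n)}

/-- Salient closed cone: `‖x+y‖ ≥ c‖x‖` on the cone. -/
lemma cone_norm_add (hn : 1 ≤ n) (hC : IsConeOrder Cp) :
    ∃ c : ℝ, 0 < c ∧ ∀ x ∈ Cp, ∀ y ∈ Cp, c * ‖x‖ ≤ ‖x + y‖ := by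
  by_contra h
  push_neg at h
  have hseq : ∀ k : ℕ, ∃ x ∈ Cp, ∃ y ∈ Cp,
      ‖x‖ = 1 ∧ ‖y‖ ≤ 2 ∧ ‖x + y‖ < 1 / (k + 1) := by
    intro k
    obtain ⟨x, hx, y, hy, hxy⟩ := h (1 / (k + 1)) (by positivity)
    have hxne : x ≠ 0 := by
      intro h0
      rw [h0, norm_zero, mul_zero] at hxy
      exact absurd (norm_nonneg _) (not_le.2 hxy)
    have hxpos : 0 < ‖x‖ := norm_pos_iff.2 hxne
    refine ⟨‖x‖⁻¹ • x, cone_smul hC (by positivity) hx,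
      ‖x‖⁻¹ • y, cone_smul hC (by positivity) hy, ?_, ?_, ?_⟩
    · rw [norm_smul, norm_inv, norm_norm, inv_mul_cancel₀ (ne_of_gt hxpos)]
    · have h2 : ‖x‖⁻¹ • x + ‖x‖⁻¹ • y = ‖x‖⁻¹ • (x + y) := by rw [smul_add]
      have h3 : ‖‖x‖⁻¹ • (x + y)‖ = ‖x‖⁻¹ * ‖x + y‖ := by
        rw [norm_smul, norm_inv, norm_norm]
      have h4 : ‖x‖⁻¹ * ‖x + y‖ ≤ ‖x‖⁻¹ * ((1 / (k+1)) * ‖x‖) := by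
        apply mul_le_mul_of_nonneg_left (le_of_lt hxy) (by positivity)
      have h5 : ‖x‖⁻¹ * ((1 / (k+1)) * ‖x‖) = 1 / (k+1) := by
        field_simp
      have h6 : ‖‖x‖⁻¹ • x + ‖x‖⁻¹ • y‖ ≤ 1 / (k+1) := by
        rw [h2, h3]; rw [h5] at h4; exact h4
      have h7 : (1 : ℝ) / (k+1) ≤ 1 := by
        rw [div_le_one (by positivity)]; linarith [Nat.cast_nonneg (α := ℝ) k]
      have heq : ‖‖x‖⁻¹ • y‖ = ‖(‖x‖⁻¹ • x + ‖x‖⁻¹ • y) - ‖x‖⁻¹ • x‖ := by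
        rw [add_sub_cancel_left]
      calc ‖‖x‖⁻¹ • y‖ ≤ ‖‖x‖⁻¹ • x + ‖x‖⁻¹ • y‖ + ‖‖x‖⁻¹ • x‖ := by
              rw [heq]; exact norm_sub_le (‖x‖⁻¹ • x + ‖x‖⁻¹ • y) (‖x‖⁻¹ • x)
        _ ≤ 2 := by
              have h8 : ‖‖x‖⁻¹ • x‖ = 1 := by
                rw [norm_smul, norm_inv, norm_norm, inv_mul_cancel₀ (ne_of_gt hxpos)]
              rw [h8]; linarith
    · have h2 : ‖x‖⁻¹ • x + ‖x‖⁻¹ • y = ‖x‖⁻¹ • (x + y) := by rw [smul_add]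
      rw [h2, norm_smul, norm_inv, norm_norm]
      calc ‖x‖⁻¹ * ‖x + y‖ < ‖x‖⁻¹ * ((1 / (k+1)) * ‖x‖) := by
              apply mul_lt_mul_of_pos_left hxy (by positivity)
        _ = 1 / (k+1) := by field_simp
  choose x hx y hy hx1 hy2 hxy using hseq
  have hK : IsCompact ((Metric.sphere (0 : Euc n) 1) ×ˢ (Metric.closedBall (0 : Euc n) 2)) :=
    (isCompact_sphere _ _).prod (isCompact_closedBall _ _)
  have hmem : ∀ k, (x k, y k) ∈ (Metric.sphere (0 : Euc n) 1) ×ˢ (Metric.closedBall (0 : Euc n) 2) := by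
    intro k
    constructor
    · simpa [Metric.mem_sphere, dist_eq_norm] using hx1 k
    · simpa [Metric.mem_closedBall, dist_eq_norm] using hy2 k
  obtain ⟨⟨a, b⟩, hab, φ, hφ, htend⟩ := hK.tendsto_subseq hmem
  have hta : Tendsto (fun j => x (φ j)) atTop (𝓝 a) := (continuous_fst.tendsto _).comp htend
  have htb : Tendsto (fun j => y (φ j)) atTop (𝓝 b) := (continuous_snd.tendsto _).comp htend
  have ha : a ∈ Cp := hC.1.mem_of_tendsto hta (Eventually.of_forall fun j => hx (φ j))
  have hb : b ∈ Cp := hC.1.mem_of_tendsto htb (Eventually.of_forall fun j => hy (φ j))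
  have hsum : a + b = 0 := by
    have h1 : Tendsto (fun j => x (φ j) + y (φ j)) atTop (𝓝 (a + b)) := hta.add htb
    have h2 : Tendsto (fun j => x (φ j) + y (φ j)) atTop (𝓝 0) := by
      rw [tendsto_iff_norm_sub_tendsto_zero]
      have hg : Tendsto (fun j => 1 / ((φ j : ℝ) + 1)) atTop (𝓝 0) :=
        tendsto_one_div_add_atTop_nhds_zero_nat.comp hφ.tendsto_atTop
      refine squeeze_zero (fun j => by positivity) (fun j => ?_) hg
      simpa using (hxy (φ j)).le
    exact tendsto_nhds_unique h1 h2
  have hba : b = -a := eq_neg_of_add_eq_zero_right hsum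
  have h0 : a = 0 := cone_salient hC ha (hba ▸ hb)
  have : ‖a‖ = 1 := by
    have := hab.1
    simpa [Metric.mem_sphere, dist_eq_norm] using this
  rw [h0, norm_zero] at this; norm_num at this

end ConeGeom
section ConeGeom2

variable {n : ℕ} {Cp : Set (Euc n)}

/-- Order intervals below a bounded set are bounded. -/
lemma cone_bdd (hn : 1 ≤ n) (hC : IsConeOrder Cp) (a : Euc n) (C : ℝ) :
    ∃ M : ℝ, ∀ w b : Euc n, w - a ∈ Cp → b - w ∈ Cp → ‖b‖ ≤ C → ‖w‖ ≤ M := by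
  obtain ⟨c, hc, hcone⟩ := cone_norm_add hn hC
  refine ⟨‖a‖ + (C + ‖a‖) / c, ?_⟩
  intro w b hw hb hbC
  have h1 : c * ‖w - a‖ ≤ ‖(w - a) + (b - w)‖ := hcone _ hw _ hb
  have h2 : (w - a) + (b - w) = b - a := by abel
  rw [h2] at h1
  have h3 : ‖b - a‖ ≤ C + ‖a‖ := le_trans (norm_sub_le _ _) (by linarith)
  have h4 : ‖w - a‖ ≤ (C + ‖a‖) / c := by
    rw [le_div_iff₀ hc, mul_comm]; linarith
  calc ‖w‖ = ‖a + (w - a)‖ := by rw [add_sub_cancel]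
    _ ≤ ‖a‖ + ‖w - a‖ := norm_add_le _ _
    _ ≤ ‖a‖ + (C + ‖a‖) / c := by linarith

/-- For `e` interior to the cone, `v + s e` enters the interior for large `s`. -/
lemma ray_int (hC : IsConeOrder Cp) {e : Euc n} (he : e ∈ interior Cp) (v : Euc n) :
    ∃ s₀ : ℝ, ∀ s ≥ s₀, v + s • e ∈ interior Cp := by
  have htend : Tendsto (fun s : ℝ => s⁻¹ • v + e) atTop (𝓝 (0 + e)) := by
    apply Tendsto.add _ tendsto_const_nhds
    have h1 : Tendsto (fun s : ℝ => s⁻¹) atTop (𝓝 0) := tendsto_inv_atTop_zero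
    have := h1.smul_const v
    simpa using this
  rw [zero_add] at htend
  have hev : ∀ᶠ s in atTop, s⁻¹ • v + e ∈ interior Cp :=
    htend.eventually (isOpen_interior.eventually_mem he)
  obtain ⟨s₀, hs₀⟩ := eventually_atTop.1 (hev.and (eventually_ge_atTop 1))
  refine ⟨s₀, fun s hs => ?_⟩
  obtain ⟨hmem, hs1⟩ := hs₀ s hs
  have hspos : (0:ℝ) < s := lt_of_lt_of_le one_pos hs1
  have heq : v + s • e = s • (s⁻¹ • v + e) := by
    rw [smul_add, smul_smul, mul_inv_cancel₀ (ne_of_gt hspos), one_smul]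
  rw [heq]
  exact int_smul hC hspos hmem

end ConeGeom2
section FlowLemmas

variable {n : ℕ} {Φ : ℝ → Euc n → Euc n} {Cp Γ : Set (Euc n)}

lemma flow_back_forth (hΦ : IsFlow Φ) (t : ℝ) (x : Euc n) : Φ t (Φ (-t) x) = x := by
  rw [hΦ.2.2, add_neg_cancel, hΦ.2.1]

lemma flow_cont_t (hΦ : IsFlow Φ) (x : Euc n) : Continuous fun t : ℝ => Φ t x :=
  hΦ.1.comp (continuous_id.prodMk continuous_const)

lemma flow_cont_x (hΦ : IsFlow Φ) (t : ℝ) : Continuous fun x : Euc n => Φ t x :=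
  hΦ.1.comp (continuous_const.prodMk continuous_id)

lemma back_mono (hΦ : IsFlow Φ) (hcomp : StronglyCompetitive Φ Cp) {t : ℝ} (ht : 0 < t)
    {x y : Euc n} (hxy : coneLe Cp x y) : coneLe Cp (Φ (-t) x) (Φ (-t) y) := by
  apply (hcomp t ht (Φ (-t) x) (Φ (-t) y)).1
  rwa [coneLe, flow_back_forth hΦ, flow_back_forth hΦ]

lemma back_strong (hΦ : IsFlow Φ) (hcomp : StronglyCompetitive Φ Cp) {t : ℝ} (ht : 0 < t)
    {x y : Euc n} (hxy : coneLt Cp x y) : coneLL Cp (Φ (-t) x) (Φ (-t) y) := by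
  apply (hcomp t ht (Φ (-t) x) (Φ (-t) y)).2
  rwa [coneLt, flow_back_forth hΦ, flow_back_forth hΦ]

lemma gamma_back (hΓ : Dissipative Φ Γ) {g : Euc n} (hg : g ∈ Γ) (t : ℝ) :
    Φ t g ∈ Γ := by
  have := hΓ.2.2.1 t
  rw [← this]
  exact ⟨g, hg, rfl⟩

/-- Key: a point whose backward orbit is frequently bounded lies in `Γ`. -/
lemma mem_gamma_of_bdd (hΦ : IsFlow Φ) (hΓ : Dissipative Φ Γ) {x : Euc n} {M : ℝ}
    (h : ∀ k : ℕ, ∃ t ≥ (k : ℝ), ‖Φ (-t) x‖ ≤ M) : x ∈ Γ := by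
  have hcl : IsClosed Γ := hΓ.2.1.isClosed
  rw [hcl.mem_iff_infDist_zero hΓ.1]
  by_contra hne
  have hpos : 0 < infDist x Γ := lt_of_le_of_ne infDist_nonneg (Ne.symm hne)
  obtain ⟨T, hT⟩ := hΓ.2.2.2 (closedBall 0 M) (isCompact_closedBall _ _) _ hpos
  obtain ⟨k, hk⟩ := exists_nat_ge T
  obtain ⟨t, htk, htM⟩ := h k
  have h1 : infDist (Φ t (Φ (-t) x)) Γ < infDist x Γ :=
    hT t (le_trans hk htk) _ (by simpa [mem_closedBall, dist_eq_norm] using htM)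
  rw [flow_back_forth hΦ] at h1
  exact lt_irrefl _ h1

lemma repInfty_of_not_gamma (hΦ : IsFlow Φ) (hΓ : Dissipative Φ Γ) {x : Euc n}
    (hx : x ∉ Γ) : x ∈ repInfty Φ := by
  rw [repInfty, mem_setOf_eq, Filter.tendsto_atTop]
  intro M
  by_contra hev
  rw [not_eventually] at hev
  apply hx
  apply mem_gamma_of_bdd hΦ hΓ (M := M)
  intro k
  obtain ⟨t, htk, htM⟩ := (frequently_atTop.1 hev (k : ℝ))
  exact ⟨t, htk, le_of_not_ge htM⟩

lemma gamma_bound (hΓ : Dissipative Φ Γ) : ∃ C, ∀ g ∈ Γ, ‖g‖ ≤ C := by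
  obtain ⟨C, hC⟩ := hΓ.2.1.isBounded.subset_closedBall 0
  exact ⟨C, fun g hg => by simpa [mem_closedBall, dist_eq_norm] using hC hg⟩

end FlowLemmas
/-- The underlying (non-interior) set `R̃₋(+∞)`. -/
def Rtil {n : ℕ} (Φ : ℝ → Euc n → Euc n) (Cp : Set (Euc n)) (xlo : Euc n) : Set (Euc n) :=
  {x ∈ repInfty Φ | ∃ T : ℝ, 0 < T ∧ ∀ t ≥ T, coneLL Cp xlo (Φ (-t) x)}

lemma RminusInfty_eq {n : ℕ} (Φ : ℝ → Euc n → Euc n) (Cp : Set (Euc n)) (xlo : Euc n) :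
    RminusInfty Φ Cp xlo = interior (Rtil Φ Cp xlo) := rfl

section Dyn

variable {n : ℕ} {Φ : ℝ → Euc n → Euc n} {Cp Γ : Set (Euc n)} {xlo : Euc n}

lemma below_not_Rtil (hn : 1 ≤ n) (hΦ : IsFlow Φ) (hC : IsConeOrder Cp)
    (hcomp : StronglyCompetitive Φ Cp) (hΓ : Dissipative Φ Γ)
    {g0 x : Euc n} (hg0 : g0 ∈ Γ) (hx : g0 - x ∈ interior Cp) :
    x ∉ Rtil Φ Cp xlo := by
  rintro ⟨hinf, T, hT, hll⟩
  obtain ⟨C, hCb⟩ := gamma_bound hΓ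
  obtain ⟨M, hM⟩ := cone_bdd hn hC xlo C
  have hlt : coneLt Cp x g0 := by
    refine ⟨interior_subset hx, fun h => ?_⟩
    rw [h, sub_self] at hx
    exact zero_not_int hn hC hx
  have hbd : ∀ t ≥ max T 1, ‖Φ (-t) x‖ ≤ M := by
    intro t ht
    have ht1 : (0:ℝ) < t := lt_of_lt_of_le one_pos (le_trans (le_max_right _ _) ht)
    have h1 : coneLL Cp (Φ (-t) x) (Φ (-t) g0) := back_strong hΦ hcomp ht1 hlt
    have h2 : coneLL Cp xlo (Φ (-t) x) := hll t (le_trans (le_max_left _ _) ht)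
    exact hM _ (Φ (-t) g0) (interior_subset h2) (interior_subset h1)
      (hCb _ (gamma_back hΓ hg0 (-t)))
  have hev : ∀ᶠ t in atTop, M + 1 ≤ ‖Φ (-t) x‖ := (Filter.tendsto_atTop.1 hinf) (M + 1)
  obtain ⟨t, ht1, ht2⟩ :=
    ((eventually_ge_atTop (max T 1)).and hev).exists
  linarith [hbd t ht1]

lemma above_Rtil (hn : 1 ≤ n) (hΦ : IsFlow Φ) (hC : IsConeOrder Cp)
    (hcomp : StronglyCompetitive Φ Cp) (hΓ : Dissipative Φ Γ)
    (hlo : ∀ g ∈ Γ, coneLe Cp xlo g)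
    {x : Euc n} (hx : ∀ g ∈ Γ, x - g ∈ interior Cp) :
    x ∈ Rtil Φ Cp xlo := by
  obtain ⟨g, hg⟩ := hΓ.1
  have hxg : x ∉ Γ := by
    intro h
    have := hx x h
    rw [sub_self] at this
    exact zero_not_int hn hC this
  refine ⟨repInfty_of_not_gamma hΦ hΓ hxg, 1, one_pos, fun t ht => ?_⟩
  have ht0 : (0:ℝ) < t := lt_of_lt_of_le one_pos ht
  have hlt : coneLt Cp g x := by
    refine ⟨interior_subset (hx g hg), fun h => ?_⟩
    have := hx g hg
    rw [h, sub_self] at this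
    exact zero_not_int hn hC this
  have h1 : coneLL Cp (Φ (-t) g) (Φ (-t) x) := back_strong hΦ hcomp ht0 hlt
  have h2 : coneLe Cp xlo (Φ (-t) g) := hlo _ (gamma_back hΓ hg (-t))
  have : Φ (-t) x - xlo = (Φ (-t) x - Φ (-t) g) + (Φ (-t) g - xlo) := by abel
  rw [coneLL, this]
  exact int_add_cone hC h1 h2

lemma Rtil_up (hn : 1 ≤ n) (hΦ : IsFlow Φ) (hC : IsConeOrder Cp)
    (hcomp : StronglyCompetitive Φ Cp)
    {x c : Euc n} (hx : x ∈ Rtil Φ Cp xlo) (hc : c ∈ Cp) :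
    x + c ∈ Rtil Φ Cp xlo := by
  obtain ⟨hinf, T, hT, hll⟩ := hx
  have hle : ∀ t ≥ max T 1, coneLe Cp (Φ (-t) x) (Φ (-t) (x + c)) := by
    intro t ht
    have ht0 : (0:ℝ) < t := lt_of_lt_of_le one_pos (le_trans (le_max_right _ _) ht)
    exact back_mono hΦ hcomp ht0 (by rw [coneLe, add_sub_cancel_left]; exact hc)
  constructor
  · rw [repInfty, mem_setOf_eq, Filter.tendsto_atTop]
    intro M'
    obtain ⟨M, hM⟩ := cone_bdd hn hC xlo M'
    filter_upwards [Filter.tendsto_atTop.1 hinf (M + 1), eventually_ge_atTop (max T 1)]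
      with t htM ht
    by_contra hb
    push_neg at hb
    have h2 : coneLL Cp xlo (Φ (-t) x) := hll t (le_trans (le_max_left _ _) ht)
    have := hM (Φ (-t) x) (Φ (-t) (x + c)) (interior_subset h2) (hle t ht) hb.le
    linarith
  · refine ⟨max T 1, lt_of_lt_of_le one_pos (le_max_right _ _), fun t ht => ?_⟩
    have h2 : coneLL Cp xlo (Φ (-t) x) := hll t (le_trans (le_max_left _ _) ht)
    have heq : Φ (-t) (x + c) - xlo
        = (Φ (-t) x - xlo) + (Φ (-t) (x + c) - Φ (-t) x) := by abel
    rw [coneLL, heq]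
    exact int_add_cone hC h2 (hle t ht)

end Dyn
/-- The "height" of a point over the boundary of `S` along direction `e`. -/
def sigmaHat {n : ℕ} (S : Set (Euc n)) (e : Euc n) (x : Euc n) : ℝ :=
  sInf {s : ℝ | x + s • e ∈ S}

section Sigma

variable {n : ℕ} {Cp S : Set (Euc n)} {e : Euc n}

lemma setA_eq_Ioi (hC : IsConeOrder Cp) (hSo : IsOpen S)
    (hSup : ∀ x ∈ S, ∀ c ∈ Cp, x + c ∈ S) (he : e ∈ interior Cp)
    (hne : ∀ x : Euc n, ∃ s : ℝ, x + s • e ∈ S)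
    (hbl : ∀ x : Euc n, ∃ s₁ : ℝ, ∀ s ≤ s₁, x + s • e ∉ S) (x : Euc n) :
    {s : ℝ | x + s • e ∈ S} = Ioi (sigmaHat S e x) := by
  set A := {s : ℝ | x + s • e ∈ S} with hA
  have hup : ∀ s ∈ A, ∀ s', s ≤ s' → s' ∈ A := by
    intro s hs s' hss
    rcases eq_or_lt_of_le hss with rfl | hlt
    · exact hs
    · have h1 : x + s' • e = (x + s • e) + (s' - s) • e := by
        rw [sub_smul]; abel
      have h2 : (s' - s) • e ∈ Cp :=
        cone_smul hC (by linarith) (interior_subset he)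
      rw [hA, mem_setOf_eq, h1]
      exact hSup _ hs _ h2
  have hAo : IsOpen A := hSo.preimage (by continuity)
  have hAne : A.Nonempty := hne x
  obtain ⟨s₁, hs₁⟩ := hbl x
  have hAbd : BddBelow A := ⟨s₁, fun s hs => by
    by_contra hlt
    exact hs₁ s (le_of_not_ge hlt) hs⟩
  apply Subset.antisymm
  · intro s hs
    obtain ⟨ε, hε, hball⟩ := Metric.isOpen_iff.1 hAo s hs
    have hdist : dist (s - ε / 2) s = ε / 2 := by
      rw [Real.dist_eq, show s - ε / 2 - s = -(ε / 2) by ring, abs_neg,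
        abs_of_pos (by linarith : (0:ℝ) < ε / 2)]
    have hmem : s - ε / 2 ∈ A := hball (by rw [mem_ball, hdist]; linarith)
    have := csInf_le hAbd hmem
    rw [mem_Ioi, sigmaHat]
    calc sInf A ≤ s - ε/2 := this
      _ < s := by linarith
  · intro s hs
    obtain ⟨a, ha, has⟩ := exists_lt_of_csInf_lt hAne hs
    exact hup a ha s has.le

lemma mem_S_iff (hC : IsConeOrder Cp) (hSo : IsOpen S)
    (hSup : ∀ x ∈ S, ∀ c ∈ Cp, x + c ∈ S) (he : e ∈ interior Cp)
    (hne : ∀ x : Euc n, ∃ s : ℝ, x + s • e ∈ S)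
    (hbl : ∀ x : Euc n, ∃ s₁ : ℝ, ∀ s ≤ s₁, x + s • e ∉ S) (x : Euc n) (s : ℝ) :
    x + s • e ∈ S ↔ sigmaHat S e x < s := by
  have h := setA_eq_Ioi hC hSo hSup he hne hbl x
  constructor
  · intro hx
    have : s ∈ {s : ℝ | x + s • e ∈ S} := hx
    rwa [h, mem_Ioi] at this
  · intro hx
    have : s ∈ Ioi (sigmaHat S e x) := hx
    rw [← h] at this
    exact this

lemma mem_S_iff0 (hC : IsConeOrder Cp) (hSo : IsOpen S)
    (hSup : ∀ x ∈ S, ∀ c ∈ Cp, x + c ∈ S) (he : e ∈ interior Cp)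
    (hne : ∀ x : Euc n, ∃ s : ℝ, x + s • e ∈ S)
    (hbl : ∀ x : Euc n, ∃ s₁ : ℝ, ∀ s ≤ s₁, x + s • e ∉ S) (x : Euc n) :
    x ∈ S ↔ sigmaHat S e x < 0 := by
  have := mem_S_iff hC hSo hSup he hne hbl x 0
  simpa using this

lemma sigma_shift (hC : IsConeOrder Cp) (hSo : IsOpen S)
    (hSup : ∀ x ∈ S, ∀ c ∈ Cp, x + c ∈ S) (he : e ∈ interior Cp)
    (hne : ∀ x : Euc n, ∃ s : ℝ, x + s • e ∈ S)
    (hbl : ∀ x : Euc n, ∃ s₁ : ℝ, ∀ s ≤ s₁, x + s • e ∉ S) (x : Euc n) (t : ℝ) :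
    sigmaHat S e (x + t • e) = sigmaHat S e x - t := by
  have hset : {s : ℝ | (x + t • e) + s • e ∈ S} = Ioi (sigmaHat S e x - t) := by
    ext s
    have h1 : (x + t • e) + s • e = x + (t + s) • e := by rw [add_smul]; abel
    rw [mem_setOf_eq, h1, mem_S_iff hC hSo hSup he hne hbl x (t + s), mem_Ioi]
    constructor <;> intro <;> linarith
  rw [sigmaHat, hset, csInf_Ioi]

lemma closure_sigma_le (hC : IsConeOrder Cp) (hSo : IsOpen S)
    (hSup : ∀ x ∈ S, ∀ c ∈ Cp, x + c ∈ S) (he : e ∈ interior Cp)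
    (hne : ∀ x : Euc n, ∃ s : ℝ, x + s • e ∈ S)
    (hbl : ∀ x : Euc n, ∃ s₁ : ℝ, ∀ s ≤ s₁, x + s • e ∉ S) {x : Euc n}
    (hx : x ∈ closure S) : sigmaHat S e x ≤ 0 := by
  have key : ∀ ε : ℝ, 0 < ε → x + ε • e ∈ S := by
    intro ε hε
    obtain ⟨w, hwS, hw⟩ := mem_closure_iff_seq_limit.1 hx
    have hεe : ε • e ∈ interior Cp := int_smul hC hε he
    have htend : Tendsto (fun k => x + ε • e - w k) atTop (𝓝 (ε • e)) := by
      have := (tendsto_const_nhds (x := x + ε • e)).sub hw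
      simpa using this
    have hev : ∀ᶠ k in atTop, x + ε • e - w k ∈ interior Cp :=
      htend.eventually (isOpen_interior.eventually_mem hεe)
    obtain ⟨k, hk⟩ := hev.exists
    have : x + ε • e = w k + (x + ε • e - w k) := by abel
    rw [this]
    exact hSup _ (hwS k) _ (interior_subset hk)
  by_contra hpos
  push_neg at hpos
  have h1 := (mem_S_iff hC hSo hSup he hne hbl x (sigmaHat S e x / 2)).1
    (key _ (by linarith))
  linarith

lemma sigma_cont (hC : IsConeOrder Cp) (hSo : IsOpen S)
    (hSup : ∀ x ∈ S, ∀ c ∈ Cp, x + c ∈ S) (he : e ∈ interior Cp)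
    (hne : ∀ x : Euc n, ∃ s : ℝ, x + s • e ∈ S)
    (hbl : ∀ x : Euc n, ∃ s₁ : ℝ, ∀ s ≤ s₁, x + s • e ∉ S) :
    Continuous (sigmaHat S e) := by
  rw [continuous_iff_continuousAt]
  intro x
  set a := sigmaHat S e x with ha
  rw [ContinuousAt, tendsto_order]
  constructor
  · intro b hb
    set ε := (a - b) / 2 with hε
    have hεpos : 0 < ε := by rw [hε]; linarith
    have hnotcl : x + (a - ε) • e ∉ closure S := by
      intro hmem
      have := closure_sigma_le hC hSo hSup he hne hbl hmem
      rw [sigma_shift hC hSo hSup he hne hbl] at this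
      linarith
    have hopen : IsOpen {y : Euc n | y + (a - ε) • e ∉ closure S} := by
      have : {y : Euc n | y + (a - ε) • e ∉ closure S}
          = (fun y => y + (a - ε) • e) ⁻¹' (closure S)ᶜ := rfl
      rw [this]
      exact isClosed_closure.isOpen_compl.preimage (by continuity)
    have hev : ∀ᶠ y in 𝓝 x, y + (a - ε) • e ∉ closure S :=
      hopen.eventually_mem hnotcl
    filter_upwards [hev] with y hy
    have hyS : y + (a - ε) • e ∉ S := fun h => hy (subset_closure h)
    have : ¬ (sigmaHat S e y < a - ε) := fun h =>
      hyS ((mem_S_iff hC hSo hSup he hne hbl y (a - ε)).2 h)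
    push_neg at this
    calc b < a - ε := by rw [hε]; linarith
      _ ≤ sigmaHat S e y := this
  · intro b hb
    have hmem : x + b • e ∈ S := (mem_S_iff hC hSo hSup he hne hbl x b).2 hb
    have hev : ∀ᶠ y in 𝓝 x, y + b • e ∈ S := (hSo.preimage
      (by continuity : Continuous fun y : Euc n => y + b • e)).eventually_mem hmem
    filter_upwards [hev] with y hy
    exact (mem_S_iff hC hSo hSup he hne hbl y b).1 hy

lemma lowerBdry_eq_level (hn : 1 ≤ n) (hC : IsConeOrder Cp) (hSo : IsOpen S)
    (hSup : ∀ x ∈ S, ∀ c ∈ Cp, x + c ∈ S) (he : e ∈ interior Cp)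
    (hne : ∀ x : Euc n, ∃ s : ℝ, x + s • e ∈ S)
    (hbl : ∀ x : Euc n, ∃ s₁ : ℝ, ∀ s ≤ s₁, x + s • e ∉ S) :
    lowerBdry Cp S = {x | sigmaHat S e x = 0} := by
  ext z
  constructor
  · rintro ⟨⟨u, huS, hut, hull⟩, hnv⟩
    have hle : sigmaHat S e z ≤ 0 := by
      have key : ∀ ε : ℝ, 0 < ε → z + ε • e ∈ S := by
        intro ε hε
        have hεe : ε • e ∈ interior Cp := int_smul hC hε he
        have htend : Tendsto (fun k => z + ε • e - u k) atTop (𝓝 (ε • e)) := by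
          have := (tendsto_const_nhds (x := z + ε • e)).sub hut
          simpa using this
        obtain ⟨k, hk⟩ := (htend.eventually (isOpen_interior.eventually_mem hεe)).exists
        have heq : z + ε • e = u k + (z + ε • e - u k) := by abel
        rw [heq]
        exact hSup _ (huS k) _ (interior_subset hk)
      by_contra hpos
      push_neg at hpos
      have h1 := (mem_S_iff hC hSo hSup he hne hbl z (sigmaHat S e z / 2)).1
        (key _ (by linarith))
      linarith
    have hge : 0 ≤ sigmaHat S e z := by
      by_contra hneg
      push_neg at hneg
      set a := sigmaHat S e z with ha
      apply hnv
      refine ⟨fun i => z + (a / (2 * ((i:ℝ) + 1))) • e, fun i => ?_, ?_, fun i => ?_⟩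
      · rw [mem_S_iff hC hSo hSup he hne hbl]
        have h1 : (0:ℝ) < 2 * ((i:ℝ) + 1) := by positivity
        rw [← ha, lt_div_iff₀ h1]
        nlinarith [Nat.cast_nonneg (α := ℝ) i]
      · have h0 : Tendsto (fun i : ℕ => a / (2 * ((i:ℝ) + 1))) atTop (𝓝 0) := by
          have h1 : (fun i : ℕ => a / (2 * ((i:ℝ) + 1)))
              = fun i : ℕ => (a / 2) * (1 / ((i:ℝ) + 1)) := by
            funext i; field_simp
          rw [h1]
          have := tendsto_one_div_add_atTop_nhds_zero_nat.const_mul (a / 2)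
          simpa using this
        have h2 : Tendsto (fun i : ℕ => (a / (2 * ((i:ℝ) + 1))) • e) atTop
            (𝓝 ((0:ℝ) • e)) := h0.smul_const e
        rw [zero_smul] at h2
        have := (tendsto_const_nhds (x := z)).add h2
        simpa using this
      · have hc : a / (2 * ((i:ℝ) + 1)) < 0 :=
          div_neg_of_neg_of_pos hneg (by positivity)
        have heq : z - (z + (a / (2 * ((i:ℝ) + 1))) • e)
            = (-(a / (2 * ((i:ℝ) + 1)))) • e := by
          rw [neg_smul]; abel
        rw [coneLL, heq]
        exact int_smul hC (by linarith) he
    exact le_antisymm hle hge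
  · intro hz
    have hz0 : sigmaHat S e z = 0 := hz
    constructor
    · refine ⟨fun i => z + (1 / ((i:ℝ) + 1)) • e, fun i => ?_, ?_, fun i => ?_⟩
      · rw [mem_S_iff hC hSo hSup he hne hbl, hz0]
        positivity
      · have h1 : Tendsto (fun i : ℕ => (1 / ((i:ℝ) + 1)) • e) atTop (𝓝 ((0:ℝ) • e)) :=
          (tendsto_one_div_add_atTop_nhds_zero_nat).smul_const e
        rw [zero_smul] at h1
        have := (tendsto_const_nhds (x := z)).add h1
        simpa using this
      · rw [coneLL, add_sub_cancel_left]
        exact int_smul hC (by positivity) he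
    · rintro ⟨v, hvS, hvt, hvll⟩
      have h1 : z = v 0 + (z - v 0) := by abel
      have h2 : z ∈ S := by
        rw [h1]
        exact hSup _ (hvS 0) _ (interior_subset (hvll 0))
      have := (mem_S_iff0 hC hSo hSup he hne hbl z).1 h2
      rw [hz0] at this
      exact lt_irrefl _ this

end Sigma
section Homeo

variable {n : ℕ} {Cp S : Set (Euc n)} {e : Euc n}

open Module

lemma level_homeo (hn : 2 ≤ n) (hC : IsConeOrder Cp) (hSo : IsOpen S)
    (hSup : ∀ x ∈ S, ∀ c ∈ Cp, x + c ∈ S) (he : e ∈ interior Cp)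
    (hne : ∀ x : Euc n, ∃ s : ℝ, x + s • e ∈ S)
    (hbl : ∀ x : Euc n, ∃ s₁ : ℝ, ∀ s ≤ s₁, x + s • e ∉ S) :
    Nonempty (↥{x | sigmaHat S e x = 0} ≃ₜ Euc (n - 1)) := by
  have hn1 : 1 ≤ n := le_trans (by norm_num) hn
  have hene : e ≠ 0 := by
    intro h
    rw [h] at he
    exact zero_not_int hn1 hC he
  set σ := sigmaHat S e with hσ
  have hσc : Continuous σ := sigma_cont hC hSo hSup he hne hbl
  have hshift : ∀ x t, σ (x + t • e) = σ x - t := sigma_shift hC hSo hSup he hne hbl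
  set ν : ℝ := ‖e‖ ^ 2 with hν
  have hνpos : 0 < ν := by
    have := norm_pos_iff.2 hene
    positivity
  set l : Euc n →L[ℝ] ℝ := innerSL ℝ e with hl
  have hle : l e = ν := by
    rw [hl, hν]
    simpa using real_inner_self_eq_norm_sq e
  set H : Submodule ℝ (Euc n) := LinearMap.ker (l : Euc n →ₗ[ℝ] ℝ) with hH
  have hmemH : ∀ y : Euc n, y ∈ H ↔ l y = 0 := fun y => LinearMap.mem_ker
  -- the graph homeomorphism
  have key : ∀ z : Euc n, σ z = 0 → z - (l z / ν) • e ∈ H := by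
    intro z _
    rw [hmemH, map_sub, map_smul, hle, smul_eq_mul]
    field_simp
    ring
  have keyinv : ∀ y : Euc n, y ∈ H → σ (y + σ y • e) = 0 := by
    intro y _
    rw [hshift]; ring
  let F : ↥{x | sigmaHat S e x = 0} → ↥H :=
    fun z => ⟨z.1 - (l z.1 / ν) • e, key z.1 z.2⟩
  let G : ↥H → ↥{x | sigmaHat S e x = 0} :=
    fun y => ⟨y.1 + σ y.1 • e, keyinv y.1 y.2⟩
  have hFG : Function.LeftInverse G F := by
    rintro ⟨z, hz⟩
    have hz0 : σ z = 0 := hz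
    apply Subtype.ext
    show (z - (l z / ν) • e) + σ (z - (l z / ν) • e) • e = z
    have h1 : z - (l z / ν) • e = z + (-(l z / ν)) • e := by
      rw [neg_smul]; abel
    have h2 : σ (z - (l z / ν) • e) = l z / ν := by
      rw [h1, hshift, hz0]; ring
    rw [h2, h1, add_assoc, ← add_smul]
    simp
  have hGF : Function.RightInverse G F := by
    rintro ⟨y, hy⟩
    have hy0 : l y = 0 := (hmemH y).1 hy
    apply Subtype.ext
    show (y + σ y • e) - (l (y + σ y • e) / ν) • e = y
    have h1 : l (y + σ y • e) = σ y * ν := by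
      rw [map_add, map_smul, hle, smul_eq_mul, hy0, zero_add]
    rw [h1]
    have h2 : σ y * ν / ν = σ y := by field_simp
    rw [h2]; abel
  have hFc : Continuous F := by
    apply Continuous.subtype_mk
    exact (continuous_subtype_val).sub
      (((l.continuous.comp continuous_subtype_val).div_const ν).smul continuous_const)
  have hGc : Continuous G := by
    apply Continuous.subtype_mk
    exact (continuous_subtype_val).add
      (((hσc.comp continuous_subtype_val)).smul continuous_const)
  let E1 : ↥{x | sigmaHat S e x = 0} ≃ₜ ↥H :=
    { toFun := F, invFun := G, left_inv := hFG, right_inv := hGF,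
      continuous_toFun := hFc, continuous_invFun := hGc }
  -- H is (n-1)-dimensional
  have hsurj : Function.Surjective l := by
    intro c
    refine ⟨(c / ν) • e, ?_⟩
    rw [map_smul, hle, smul_eq_mul]
    field_simp
  have hrange : LinearMap.range (l : Euc n →ₗ[ℝ] ℝ) = ⊤ := LinearMap.range_eq_top.2 hsurj
  have hrank : finrank ℝ ↥H = n - 1 := by
    have hform := LinearMap.finrank_range_add_finrank_ker (l : Euc n →ₗ[ℝ] ℝ)
    have h1 : LinearMap.range (l : Euc n →ₗ[ℝ] ℝ) = ⊤ := by
      rw [LinearMap.range_eq_top]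
      exact hsurj
    rw [h1, finrank_top, finrank_self, finrank_euclideanSpace_fin] at hform
    have h2 : LinearMap.ker (l : Euc n →ₗ[ℝ] ℝ) = H := rfl
    rw [h2] at hform
    omega
  have hrank2 : finrank ℝ ↥H = finrank ℝ (Euc (n - 1)) := by
    rw [hrank, finrank_euclideanSpace_fin]
  let E2 : ↥H ≃L[ℝ] Euc (n - 1) :=
    (LinearEquiv.ofFinrankEq _ _ hrank2).toContinuousLinearEquiv
  exact ⟨E1.trans E2.toHomeomorph⟩

end Homeo
section Inst

variable {n : ℕ} {Φ : ℝ → Euc n → Euc n} {Cp Γ : Set (Euc n)} {xlo : Euc n}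

lemma S_open (Φ : ℝ → Euc n → Euc n) (Cp : Set (Euc n)) (xlo : Euc n) :
    IsOpen (RminusInfty Φ Cp xlo) := isOpen_interior

lemma S_up (hn : 1 ≤ n) (hΦ : IsFlow Φ) (hC : IsConeOrder Cp)
    (hcomp : StronglyCompetitive Φ Cp) :
    ∀ x ∈ RminusInfty Φ Cp xlo, ∀ c ∈ Cp, x + c ∈ RminusInfty Φ Cp xlo := by
  intro x hx c hc
  rw [RminusInfty_eq] at hx ⊢
  have hsub : (fun z => z + c) '' interior (Rtil Φ Cp xlo) ⊆ Rtil Φ Cp xlo := by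
    rintro _ ⟨z, hz, rfl⟩
    exact Rtil_up hn hΦ hC hcomp (interior_subset hz) hc
  have hopen : IsOpen ((fun z => z + c) '' interior (Rtil Φ Cp xlo)) :=
    (Homeomorph.addRight c).isOpenMap _ isOpen_interior
  exact interior_maximal hsub hopen ⟨x, hx, rfl⟩

lemma Rtil_add_int (hn : 1 ≤ n) (hΦ : IsFlow Φ) (hC : IsConeOrder Cp)
    (hcomp : StronglyCompetitive Φ Cp) {x c : Euc n}
    (hx : x ∈ Rtil Φ Cp xlo) (hc : c ∈ interior Cp) :
    x + c ∈ RminusInfty Φ Cp xlo := by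
  rw [RminusInfty_eq]
  have hsub : (fun z => x + z) '' interior Cp ⊆ Rtil Φ Cp xlo := by
    rintro _ ⟨z, hz, rfl⟩
    exact Rtil_up hn hΦ hC hcomp hx (interior_subset hz)
  have hopen : IsOpen ((fun z => x + z) '' interior Cp) :=
    (Homeomorph.addLeft x).isOpenMap _ isOpen_interior
  exact interior_maximal hsub hopen ⟨c, hc, rfl⟩

lemma hne_inst (hn : 1 ≤ n) (hΦ : IsFlow Φ) (hC : IsConeOrder Cp)
    (hcomp : StronglyCompetitive Φ Cp) (hΓ : Dissipative Φ Γ)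
    (hlo : ∀ g ∈ Γ, coneLe Cp xlo g) {e : Euc n} (he : e ∈ interior Cp) :
    ∀ x : Euc n, ∃ s : ℝ, x + s • e ∈ RminusInfty Φ Cp xlo := by
  intro x
  -- uniform s₀ with x + s₀ • e ≫ Γ, by compactness
  have hray : ∀ v : Euc n, ∃ s₀ : ℝ, ∀ s ≥ s₀, v + s • e ∈ interior Cp :=
    ray_int hC he
  choose sfun hsfun using hray
  set U : Euc n → Set (Euc n) :=
    fun g => {g' | x + (sfun (x - g)) • e - g' ∈ interior Cp} with hU
  have hUopen : ∀ g, IsOpen (U g) := by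
    intro g
    have : U g = (fun g' => x + (sfun (x - g)) • e - g') ⁻¹' interior Cp := rfl
    rw [this]
    exact isOpen_interior.preimage (by continuity)
  have hUcov : Γ ⊆ ⋃ g ∈ Γ, U g := by
    intro g hg
    refine mem_biUnion hg ?_
    have := hsfun (x - g) (sfun (x - g)) le_rfl
    show x + (sfun (x - g)) • e - g ∈ interior Cp
    have heq : x + (sfun (x - g)) • e - g = (x - g) + (sfun (x - g)) • e := by abel
    rw [heq]; exact this
  obtain ⟨b, hbΓ, hbfin, hbcov⟩ := hΓ.2.1.elim_finite_subcover_image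
    (fun g _ => hUopen g) hUcov
  obtain ⟨s₀, hs₀⟩ := (hbfin.image (fun g => sfun (x - g))).bddAbove
  have habove : ∀ g ∈ Γ, (x + (s₀ + 1) • e) - g ∈ interior Cp := by
    intro g hg
    obtain ⟨gi, hgi, hgUi⟩ := mem_iUnion₂.1 (hbcov hg)
    have h1 : x + (sfun (x - gi)) • e - g ∈ interior Cp := hgUi
    have h2 : sfun (x - gi) ≤ s₀ := hs₀ (mem_image_of_mem _ hgi)
    have heq : (x + (s₀ + 1) • e) - g
        = (x + (sfun (x - gi)) • e - g) + ((s₀ + 1) - sfun (x - gi)) • e := by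
      rw [sub_smul]; abel
    rw [heq]
    exact int_add_cone hC h1 (cone_smul hC (by linarith) (interior_subset he))
  have hmem : x + (s₀ + 1) • e ∈ Rtil Φ Cp xlo :=
    above_Rtil hn hΦ hC hcomp hΓ hlo habove
  refine ⟨s₀ + 2, ?_⟩
  have heq : x + (s₀ + 2) • e = (x + (s₀ + 1) • e) + e := by
    rw [show (s₀ + 2 : ℝ) = (s₀ + 1) + 1 by ring, add_smul, one_smul]; abel
  rw [heq]
  exact Rtil_add_int hn hΦ hC hcomp hmem he

lemma hbl_inst (hn : 1 ≤ n) (hΦ : IsFlow Φ) (hC : IsConeOrder Cp)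
    (hcomp : StronglyCompetitive Φ Cp) (hΓ : Dissipative Φ Γ)
    {e : Euc n} (he : e ∈ interior Cp) :
    ∀ x : Euc n, ∃ s₁ : ℝ, ∀ s ≤ s₁, x + s • e ∉ RminusInfty Φ Cp xlo := by
  intro x
  obtain ⟨g, hg⟩ := hΓ.1
  obtain ⟨s₀, hs₀⟩ := ray_int hC he (g - x)
  refine ⟨-s₀, fun s hs hmem => ?_⟩
  have h1 : g - (x + s • e) ∈ interior Cp := by
    have heq : g - (x + s • e) = (g - x) + (-s) • e := by
      rw [neg_smul]; abel
    rw [heq]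
    exact hs₀ (-s) (by linarith)
  exact below_not_Rtil hn hΦ hC hcomp hΓ hg h1
    (interior_subset (by rwa [RminusInfty_eq] at hmem))

end Inst
theorem stmt14 {n : ℕ} (hn : 2 ≤ n) (Φ : ℝ → Euc n → Euc n) (Cp Γ : Set (Euc n))
    (hΦ : IsFlow Φ) (hC : IsConeOrder Cp) (hcomp : StronglyCompetitive Φ Cp)
    (hΓ : Dissipative Φ Γ)
    (xlo : Euc n) (hlo : ∀ g ∈ Γ, coneLe Cp xlo g) :
    IsClosed (MminusInfty Φ Cp xlo) ∧
    Nonempty (↥(MminusInfty Φ Cp xlo) ≃ₜ Euc (n - 1)) ∧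
    ∀ q ∈ equilibria Φ, MminusInfty Φ Cp xlo ∩ Mminus Φ Cp q = ∅ := by
  have hn1 : 1 ≤ n := le_trans (by norm_num) hn
  obtain ⟨e, he⟩ := hC.2.2.2.1
  set S := RminusInfty Φ Cp xlo with hS
  have hSo : IsOpen S := S_open Φ Cp xlo
  have hSup : ∀ x ∈ S, ∀ c ∈ Cp, x + c ∈ S := S_up hn1 hΦ hC hcomp
  have hne : ∀ x : Euc n, ∃ s : ℝ, x + s • e ∈ S :=
    hne_inst hn1 hΦ hC hcomp hΓ hlo he
  have hbl : ∀ x : Euc n, ∃ s₁ : ℝ, ∀ s ≤ s₁, x + s • e ∉ S :=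
    hbl_inst hn1 hΦ hC hcomp hΓ he
  have hM : MminusInfty Φ Cp xlo = {x | sigmaHat S e x = 0} :=
    lowerBdry_eq_level hn1 hC hSo hSup he hne hbl
  have hσc : Continuous (sigmaHat S e) := sigma_cont hC hSo hSup he hne hbl
  refine ⟨?_, ?_, ?_⟩
  · rw [hM]
    exact isClosed_eq hσc continuous_const
  · rw [hM]
    exact level_homeo hn hC hSo hSup he hne hbl
  · intro q _
    rw [eq_empty_iff_forall_notMem]
    rintro z ⟨hz1, hz2⟩
    have hz0 : sigmaHat S e z = 0 := by rw [hM] at hz1; exact hz1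
    obtain ⟨⟨u, huB, hut, hull⟩, -⟩ := hz2
    -- the approximating point `u 0` lies in `Γ`
    have hu0 : u 0 ∈ Γ := by
      apply mem_gamma_of_bdd hΦ hΓ (M := ‖q‖ + 1)
      have htq : Tendsto (fun t : ℝ => Φ (-t) (u 0)) atTop (𝓝 q) := (huB 0).1
      have hev : ∀ᶠ t in atTop, ‖Φ (-t) (u 0)‖ ≤ ‖q‖ + 1 := by
        filter_upwards [(Metric.tendsto_nhds.1 htq) 1 one_pos] with t ht
        have h1 : ‖Φ (-t) (u 0)‖ ≤ ‖q‖ + ‖Φ (-t) (u 0) - q‖ := by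
          calc ‖Φ (-t) (u 0)‖ = ‖q + (Φ (-t) (u 0) - q)‖ := by rw [add_sub_cancel]
            _ ≤ ‖q‖ + ‖Φ (-t) (u 0) - q‖ := norm_add_le _ _
        rw [dist_eq_norm] at ht
        linarith
      intro k
      obtain ⟨t, ht1, ht2⟩ := ((eventually_ge_atTop (k:ℝ)).and hev).exists
      exact ⟨t, ht1, ht2⟩
    -- pick `δ > 0` with `z + δ e ≪ u 0`
    have hll0 : u 0 - z ∈ interior Cp := hull 0
    have htend : Tendsto (fun k : ℕ => u 0 - z - (1/((k:ℝ)+1)) • e) atTop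
        (𝓝 (u 0 - z)) := by
      have h1 : Tendsto (fun k : ℕ => (1/((k:ℝ)+1)) • e) atTop (𝓝 ((0:ℝ) • e)) :=
        tendsto_one_div_add_atTop_nhds_zero_nat.smul_const e
      rw [zero_smul] at h1
      have := (tendsto_const_nhds (x := u 0 - z)).sub h1
      simpa using this
    obtain ⟨k, hk⟩ := (htend.eventually (isOpen_interior.eventually_mem hll0)).exists
    set δ : ℝ := 1/((k:ℝ)+1) with hδdef
    have hδ : 0 < δ := by positivity
    have hxS : z + δ • e ∈ S :=
      (mem_S_iff hC hSo hSup he hne hbl z δ).2 (by rw [hz0]; exact hδ)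
    have hbelow : u 0 - (z + δ • e) ∈ interior Cp := by
      have heq : u 0 - (z + δ • e) = u 0 - z - δ • e := by abel
      rw [heq]
      exact hk
    exact below_not_Rtil hn1 hΦ hC hcomp hΓ hu0 hbelow
      (interior_subset (by rwa [hS, RminusInfty_eq] at hxS))
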